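/- arXiv:math/0110233 — 2 statements merged into one kernel-verified Lean document; each statement's English description precedes it below -/
import Mathlib

section
/- Let X be a finite group, let i be an involution in X, and for x ∈ X with z = i · i^x of odd order define ζ₁(x) = z^((o(z)+1)/2) · x⁻¹, where o(z) is the order of z. Then for every c ∈ C_X(i) and every x ∈ X with i · i^x of odd order, the element i · i^(cx) also has odd order and ζ₁(cx) = ζ₁(x) · c⁻¹. -/
/-- For `z = i * i ^ x` of odd order, `ζ₁ x = z ^ ((o(z) + 1) / 2) * x⁻¹`. -/
noncomputable def zetaOne {X : Type*} [Group X] (i x : X) : X :=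
  (i * (x⁻¹ * i * x)) ^ ((orderOf (i * (x⁻¹ * i * x)) + 1) / 2) * x⁻¹

/-- For an involution `i` in a finite group `X`, if `c` centralises `i` and
`i * i ^ x` has odd order, then `i * i ^ (c * x)` also has odd order and
`ζ₁ (c * x) = ζ₁ x * c⁻¹`. -/
theorem zetaOne_equivariant {X : Type*} [Group X] [Finite X] (i : X)
    (hi : orderOf i = 2) (c x : X) (hc : c ∈ Subgroup.centralizer {i})
    (hx : Odd (orderOf (i * (x⁻¹ * i * x)))) :
    Odd (orderOf (i * ((c * x)⁻¹ * i * (c * x)))) ∧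
    zetaOne i (c * x) = zetaOne i x * c⁻¹ := by
  rw [Subgroup.mem_centralizer_iff] at hc
  have hci : i * c = c * i := hc i rfl
  have key : (c * x)⁻¹ * i * (c * x) = x⁻¹ * i * x := by
    rw [mul_inv_rev]
    have h2 : c⁻¹ * i * c = i := by
      rw [mul_assoc, hci]; group
    calc x⁻¹ * c⁻¹ * i * (c * x) = x⁻¹ * (c⁻¹ * i * c) * x := by group
    _ = x⁻¹ * i * x := by rw [h2]
  constructor
  · rw [key]; exact hx
  · unfold zetaOne
    rw [key, mul_inv_rev, ← mul_assoc]
end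

section
/- Let X be a finite group, let i be an involution in X, let Ω = {x ∈ X : i · i^x has odd order}, and for x ∈ Ω define ζ₁(x) = z^((o(z)+1)/2) · x⁻¹ where z = i · i^x. Then ζ₁ maps Ω onto the centralizer C_X(i), and all its fibers have the same cardinality: for all a, b ∈ C_X(i), the number of x ∈ Ω with ζ₁(x) = a equals the number of x ∈ Ω with ζ₁(x) = b. (Hence, if x is uniformly distributed on X, then conditionally on x ∈ Ω the element ζ₁(x) is uniformly distributed on C_X(i).) -/
private lemma zeta_mem {X : Type*} [Group X] (i x : X) (h2 : i * i = 1)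
    (hodd : Odd (orderOf (i * (x⁻¹ * i * x)))) :
    i * zetaOne i x = zetaOne i x * i := by
  set z := i * (x⁻¹ * i * x) with hz
  set m := (orderOf z + 1) / 2 with hm
  have hiinv : i⁻¹ = i := by rw [inv_eq_iff_mul_eq_one, h2]
  have hconj : i * z * i⁻¹ = z⁻¹ := by
    rw [hz, hiinv]
    calc i * (i * (x⁻¹ * i * x)) * i = x⁻¹ * i * x * i := by
          rw [← mul_assoc, ← mul_assoc, h2]; group
      _ = (i * (x⁻¹ * i * x))⁻¹ := by
          simp [mul_inv_rev, hiinv, mul_assoc]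
  have hizm : i * z ^ m = (z ^ m)⁻¹ * i := by
    have := conj_pow (i := m) (a := i) (b := z)
    rw [hconj] at this
    rw [← inv_pow, this, hiinv]; simp [mul_assoc, h2]
  have h2m : z ^ m * z ^ m = z := by
    rw [← pow_add]
    obtain ⟨k, hk⟩ := hodd
    have : m + m = orderOf z + 1 := by omega
    rw [this, pow_succ, pow_orderOf_eq_one, one_mul]
  have hkey : z * (x⁻¹ * i) = i * x⁻¹ := by
    rw [hz]
    calc i * (x⁻¹ * i * x) * (x⁻¹ * i) = i * (x⁻¹ * (i * i)) := by group
      _ = i * x⁻¹ := by rw [h2]; group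
  show i * (z ^ m * x⁻¹) = z ^ m * x⁻¹ * i
  calc i * (z ^ m * x⁻¹) = (i * z ^ m) * x⁻¹ := by group
    _ = (z ^ m)⁻¹ * (i * x⁻¹) := by rw [hizm]; group
    _ = (z ^ m)⁻¹ * (z * (x⁻¹ * i)) := by rw [← hkey]
    _ = (z ^ m)⁻¹ * ((z ^ m * z ^ m) * (x⁻¹ * i)) := by rw [h2m]
    _ = z ^ m * x⁻¹ * i := by group

private lemma zeta_shift {X : Type*} [Group X] (i x c : X) (hc : i * c = c * i) :
    orderOf (i * ((x * c)⁻¹ * i * (x * c))) = orderOf (i * (x⁻¹ * i * x)) ∧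
    zetaOne i (x * c) = c⁻¹ * zetaOne i x := by
  have hic : i * c⁻¹ = c⁻¹ * i := by
    calc i * c⁻¹ = c⁻¹ * (c * i) * c⁻¹ := by group
      _ = c⁻¹ * (i * c) * c⁻¹ := by rw [hc]
      _ = c⁻¹ * i := by group
  have h1 : i * ((x * c)⁻¹ * i * (x * c)) = c⁻¹ * (i * (x⁻¹ * i * x)) * c := by
    calc i * ((x * c)⁻¹ * i * (x * c)) = (i * c⁻¹) * (x⁻¹ * i * x) * c := by group
      _ = c⁻¹ * (i * (x⁻¹ * i * x)) * c := by rw [hic]; group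
  set z := i * (x⁻¹ * i * x) with hz
  have hord : orderOf (c⁻¹ * z * c) = orderOf z := by
    have hsc : SemiconjBy c⁻¹ z (c⁻¹ * z * c) := by
      unfold SemiconjBy; group
    exact (hsc.orderOf_eq).symm
  refine ⟨by rw [h1]; exact hord, ?_⟩
  have hcp : (c⁻¹ * z * c) ^ ((orderOf z + 1) / 2) = c⁻¹ * z ^ ((orderOf z + 1) / 2) * c := by
    have := conj_pow (i := (orderOf z + 1) / 2) (a := c⁻¹) (b := z)
    simpa using this
  unfold zetaOne
  rw [h1, hord, hcp, ← hz]
  group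

/-- Let `i` be an involution in a finite group `X` and let
`Ω = {x | i * i ^ x has odd order}`.  Then `ζ₁` maps `Ω` onto the centraliser of `i`,
and all fibers of `ζ₁ : Ω → C_X(i)` have the same cardinality; hence for uniformly
distributed `x`, conditionally on `x ∈ Ω`, the element `ζ₁ x` is uniformly
distributed on `C_X(i)`. -/
theorem zetaOne_uniform {X : Type*} [Group X] [Finite X] (i : X) (hi : orderOf i = 2) :
    (∀ x : X, Odd (orderOf (i * (x⁻¹ * i * x))) → zetaOne i x ∈ Subgroup.centralizer {i}) ∧
    (∀ a ∈ Subgroup.centralizer {i},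
      ∃ x : X, Odd (orderOf (i * (x⁻¹ * i * x))) ∧ zetaOne i x = a) ∧
    (∀ a ∈ Subgroup.centralizer {i}, ∀ b ∈ Subgroup.centralizer {i},
      {x : X | Odd (orderOf (i * (x⁻¹ * i * x))) ∧ zetaOne i x = a}.ncard =
        {x : X | Odd (orderOf (i * (x⁻¹ * i * x))) ∧ zetaOne i x = b}.ncard) := by
  have h2 : i * i = 1 := by
    have := pow_orderOf_eq_one i
    rwa [hi, pow_two] at this
  refine ⟨?_, ?_, ?_⟩
  · intro x hodd
    rw [Subgroup.mem_centralizer_iff]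
    rintro g hg
    rw [Set.mem_singleton_iff] at hg
    rw [hg]
    exact zeta_mem i x h2 hodd
  · intro a ha
    have hai : i * a = a * i :=
      Subgroup.mem_centralizer_iff.mp ha i (Set.mem_singleton i)
    refine ⟨a⁻¹, ?_, ?_⟩
    · have hz1 : i * (a⁻¹⁻¹ * i * a⁻¹) = 1 := by
        have h3 : a * i * a⁻¹ = i := by rw [← hai]; group
        rw [inv_inv, h3, h2]
      rw [hz1, orderOf_one]
      exact odd_one
    · have hz1 : i * (a⁻¹⁻¹ * i * a⁻¹) = 1 := by
        have h3 : a * i * a⁻¹ = i := by rw [← hai]; group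
        rw [inv_inv, h3, h2]
      unfold zetaOne
      rw [hz1]
      simp
  · intro a ha b hb
    set c := a * b⁻¹ with hcdef
    have hmem : c ∈ Subgroup.centralizer {i} :=
      Subgroup.mul_mem _ ha (Subgroup.inv_mem _ hb)
    have hc : i * c = c * i :=
      Subgroup.mem_centralizer_iff.mp hmem i (Set.mem_singleton i)
    have hc' : i * c⁻¹ = c⁻¹ * i :=
      Subgroup.mem_centralizer_iff.mp (Subgroup.inv_mem _ hmem) i (Set.mem_singleton i)
    have him : {x : X | Odd (orderOf (i * (x⁻¹ * i * x))) ∧ zetaOne i x = b} =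
        (fun x => x * c) '' {x : X | Odd (orderOf (i * (x⁻¹ * i * x))) ∧ zetaOne i x = a} := by
      ext y
      constructor
      · rintro ⟨hy1, hy2⟩
        refine ⟨y * c⁻¹, ⟨?_, ?_⟩, by group⟩
        · rw [(zeta_shift i y c⁻¹ hc').1]; exact hy1
        · rw [(zeta_shift i y c⁻¹ hc').2, hy2, hcdef]; group
      · rintro ⟨x, ⟨hx1, hx2⟩, rfl⟩
        refine ⟨?_, ?_⟩
        · rw [(zeta_shift i x c hc).1]; exact hx1
        · rw [(zeta_shift i x c hc).2, hx2, hcdef]; group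
    rw [him]
    exact (Set.ncard_image_of_injective _ (mul_left_injective c)).symm
end
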